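/- Let X, Y be objects of the topos of trees presented as sheaves over ω + 1 (so that Γ(Z) = Z(ω) is the limit stage), let F : ▶(Yˣ) → Yˣ be a morphism and F̲ : Y(ω)^{X(ω)} → Y(ω)^{X(ω)} a function such that lim ∘ Γ(F) = F̲ ∘ lim, where lim({g_ν}_{ν≤ω}) = g_ω. If u : 1 → Yˣ is the unique fixed point of F (i.e., F ∘ next ∘ u = u), then u_ω(∗)_ω is a fixed point of F̲. -/

import Mathlib

open CategoryTheory

structure TObj : Type 1 where
  X : ℕ → Type
  res : ∀ n, X (n+1) → X n

@[ext]
structure THom (A B : TObj) : Type where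
  app : ∀ n, A.X n → B.X n
  nat : ∀ n (x : A.X (n+1)), app n (A.res n x) = B.res n (app (n+1) x)

instance : Category TObj where
  Hom := THom
  id A := ⟨fun _ x => x, fun _ _ => rfl⟩
  comp f g := ⟨fun n x => g.app n (f.app n x), fun n x => by (try dsimp only); rw [f.nat, g.nat]⟩
  id_comp f := rfl
  comp_id f := rfl
  assoc f g h := rfl

def Delta (Z : Type) : TObj := ⟨fun _ => Z, fun _ z => z⟩

def LaterX (A : TObj) : ℕ → Type
  | 0 => PUnit
  | n+1 => A.X n

def LaterRes (A : TObj) : ∀ n, LaterX A (n+1) → LaterX A n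
  | 0 => fun _ => PUnit.unit
  | n+1 => A.res n

def LaterObj (A : TObj) : TObj := ⟨LaterX A, LaterRes A⟩

def LaterMap {A B : TObj} (f : A ⟶ B) : LaterObj A ⟶ LaterObj B where
  app := fun n => match n with
    | 0 => fun _ => PUnit.unit
    | n+1 => f.app n
  nat := fun n => match n with
    | 0 => fun _ => rfl
    | n+1 => fun x => f.nat n x

def nextT (A : TObj) : A ⟶ LaterObj A where
  app := fun n => match n with
    | 0 => fun _ => PUnit.unit
    | n+1 => A.res n
  nat := fun n => match n with
    | 0 => fun _ => rfl
    | n+1 => fun _ => rfl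

def toUnitT (A : TObj) : A ⟶ Delta PUnit := ⟨fun _ _ => PUnit.unit, fun _ _ => rfl⟩

def OmegaObj : TObj where
  X := fun n => Fin (n+2)
  res := fun n k => ⟨min (n+1) k.val, by omega⟩

def trueT : Delta PUnit ⟶ OmegaObj where
  app := fun n _ => ⟨n+1, by omega⟩
  nat := fun n _ => by
    apply Fin.ext
    show n+1 = min (n+1) (n+2)
    omega

def topT (X : TObj) : X ⟶ OmegaObj where
  app := fun n _ => ⟨n+1, by omega⟩
  nat := fun n _ => by
    apply Fin.ext
    show n+1 = min (n+1) (n+2)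
    omega

def laterOmega : OmegaObj ⟶ OmegaObj where
  app := fun n k => ⟨min (n+1) (k.val+1), by omega⟩
  nat := fun n k => by
    apply Fin.ext
    show min (n+1) (min (n+1) k.val + 1) = min (n+1) (min (n+2) (k.val+1))
    omega

def nnOmega : OmegaObj ⟶ OmegaObj where
  app := fun n k => ⟨if k.val = 0 then 0 else n+1, by split <;> omega⟩
  nat := fun n k => by
    apply Fin.ext
    show (if min (n+1) k.val = 0 then 0 else n+1) = min (n+1) (if k.val = 0 then 0 else n+2)
    rcases Nat.eq_zero_or_pos k.val with h | h
    · simp [h]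
    · rw [if_neg (by omega), if_neg (by omega)]; omega

def ProdObj (A B : TObj) : TObj :=
  ⟨fun n => A.X n × B.X n, fun n p => (A.res n p.1, B.res n p.2)⟩

def proj1 (A B : TObj) : ProdObj A B ⟶ A := ⟨fun _ p => p.1, fun _ _ => rfl⟩
def proj2 (A B : TObj) : ProdObj A B ⟶ B := ⟨fun _ p => p.2, fun _ _ => rfl⟩

def pairT {C A B : TObj} (f : C ⟶ A) (g : C ⟶ B) : C ⟶ ProdObj A B where
  app := fun n x => (f.app n x, g.app n x)
  nat := fun n x => by
    try dsimp only
    show _ = (A.res n (f.app (n+1) x), B.res n (g.app (n+1) x))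
    rw [f.nat, g.nat]

def canProd (A B : TObj) : LaterObj (ProdObj A B) ⟶ ProdObj (LaterObj A) (LaterObj B) :=
  pairT (LaterMap (proj1 A B)) (LaterMap (proj2 A B))

def ExpObj (X Y : TObj) : TObj where
  X := fun n => {f : ∀ k, k ≤ n → X.X k → Y.X k //
    ∀ k (h : k+1 ≤ n) (x : X.X (k+1)),
      f k (Nat.le_of_succ_le h) (X.res k x) = Y.res k (f (k+1) h x)}
  res := fun n f =>
    ⟨fun k h => f.1 k (h.trans (Nat.le_succ n)),
     fun k h x => f.2 k (h.trans (Nat.le_succ n)) x⟩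

def limE {X Y : TObj} (g : Delta PUnit ⟶ ExpObj X Y) :
    (Delta PUnit ⟶ X) → (Delta PUnit ⟶ Y) := fun x =>
  { app := fun n u => (g.app n u).1 n (le_refl n) (x.app n u)
    nat := fun n u => by
      have hg : g.app n u = (ExpObj X Y).res n (g.app (n+1) u) := g.nat n u
      have hx : x.app n u = X.res n (x.app (n+1) u) := x.nat n u
      show (g.app n u).1 n (le_refl n) (x.app n u) =
        Y.res n ((g.app (n+1) u).1 (n+1) (le_refl (n+1)) (x.app (n+1) u))
      rw [hg, hx]
      exact (g.app (n+1) u).2 n (le_refl (n+1)) (x.app (n+1) u) }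

/-- If `F : ▶(Yˣ) ⟶ Yˣ` is a morphism in the topos of trees and `F̲` is a function
on `Y(ω)^{X(ω)}` (functions between global sections) such that `lim ∘ Γ(F) = F̲ ∘ lim`
(where `Γ(▶(Yˣ)) = Γ(Yˣ)` via `next`, whose `ω`-component is the identity), then the
image under `lim` of any fixed point `u : 1 ⟶ Yˣ` of `F` is a fixed point of `F̲`. -/
theorem fixedPoint_mapped_to_fixedPoint (X Y : TObj)
    (F : LaterObj (ExpObj X Y) ⟶ ExpObj X Y)
    (Fbar : ((Delta PUnit ⟶ X) → (Delta PUnit ⟶ Y)) →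
            ((Delta PUnit ⟶ X) → (Delta PUnit ⟶ Y)))
    (hcomm : ∀ g : Delta PUnit ⟶ ExpObj X Y,
        limE ((g ≫ nextT (ExpObj X Y)) ≫ F) = Fbar (limE g))
    (u : Delta PUnit ⟶ ExpObj X Y)
    (hfix : (u ≫ nextT (ExpObj X Y)) ≫ F = u) :
    Fbar (limE u) = limE u := by rw [← hcomm u, hfix]
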